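/- arXiv:1003.4072 — 2 statements merged into one kernel-verified Lean document; each statement's English description precedes it below -/
import Mathlib

section
/- For any odd positive integer w and any nonnegative integer n: E_{n,χ}(wd) + E_{n,χ}(0) = 2 · T_n(wd − 1, χ). -/
open Finset

/-- The formal exponential power series `e^{ct} = Σ cⁿ tⁿ/n!` in `ℂ[[t]]`. -/
noncomputable def expPS (c : ℂ) : PowerSeries ℂ :=
  PowerSeries.mk fun n => c ^ n / n.factorial

/-- `Σ_{a=0}^{d-1} (-1)^a χ(a) e^{at}` as a formal power series. -/
noncomputable def altSum (χ : ℤ → ℂ) (d : ℕ) : PowerSeries ℂ :=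
  ∑ a ∈ Finset.range d, ((-1 : ℂ) ^ a * χ (a : ℤ)) • expPS (a : ℂ)

/-- `E` is the family of generalized Euler polynomials attached to `χ` mod `d`:
`(Σ_{n≥0} E_{n,χ}(x) tⁿ/n!) · (e^{dt}+1) = 2 e^{xt} · Σ_{a=0}^{d-1} (-1)^a χ(a) e^{at}`. -/
def IsGenEuler (d : ℕ) (χ : ℤ → ℂ) (E : ℕ → ℂ → ℂ) : Prop :=
  ∀ x : ℂ, (PowerSeries.mk fun n => E n x / n.factorial) * (expPS (d : ℂ) + 1)
    = (2 : PowerSeries ℂ) * expPS x * altSum χ d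

/-- The alternating generalized power sum `T_k(n,χ) = Σ_{a=0}^{n} (-1)^a χ(a) a^k`
(with the convention `0^0 = 1`). -/
noncomputable def altPowSum (χ : ℤ → ℂ) (k n : ℕ) : ℂ :=
  ∑ a ∈ Finset.range (n + 1), (-1 : ℂ) ^ a * χ (a : ℤ) * (a : ℂ) ^ k

/-- The multinomial coefficient `(k+l+m)! / (k! l! m!)`. -/
def multinom (k l m : ℕ) : ℕ :=
  (k + l + m).factorial / (k.factorial * l.factorial * m.factorial)

lemma expPS_eq_rescale (c : ℂ) : expPS c = PowerSeries.rescale c (PowerSeries.exp ℂ) := by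
  ext n
  simp [expPS, PowerSeries.coeff_rescale, PowerSeries.coeff_exp, div_eq_mul_inv]

lemma expPS_mul (a b : ℂ) : expPS a * expPS b = expPS (a + b) := by
  simp [expPS_eq_rescale, PowerSeries.exp_mul_exp_eq_exp_add]

lemma expPS_zero : expPS 0 = 1 := by
  rw [expPS_eq_rescale, PowerSeries.rescale_zero]
  simp [PowerSeries.constantCoeff_exp]

lemma expPS_pow (a : ℂ) (j : ℕ) : (expPS a) ^ j = expPS (j * a) := by
  induction j with
  | zero => simp [expPS_zero]
  | succ k ih => rw [pow_succ, ih, expPS_mul]; push_cast; ring_nf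

lemma coeff_expPS (c : ℂ) (n : ℕ) : PowerSeries.coeff n (expPS c) = c ^ n / n.factorial := by
  simp [expPS]

lemma smul_expPS_eq (j : ℕ) (d : ℂ) :
    ((-1 : ℂ) ^ j) • expPS ((j : ℂ) * d) = (-expPS d) ^ j := by
  conv_rhs => rw [neg_pow, expPS_pow]
  rw [PowerSeries.smul_eq_C_mul, map_pow, map_neg, map_one]

lemma neg_one_pow_mul_odd (m d : ℕ) (hd : Odd d) : ((-1 : ℂ)) ^ (m * d) = (-1) ^ m := by
  rcases Nat.even_or_odd m with hm | hm
  · rw [hm.neg_one_pow, (hm.mul_right d).neg_one_pow]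
  · rw [hm.neg_one_pow, (hm.mul hd).neg_one_pow]

lemma altSum_mul (d : ℕ) (hd : Odd d) (χ : ℤ → ℂ)
    (hper' : ∀ (k : ℕ) (a : ℤ), χ (a + k * d) = χ a) (w : ℕ) :
    altSum χ (w * d) = (∑ j ∈ range w, ((-1 : ℂ) ^ j) • expPS ((j : ℂ) * d)) * altSum χ d := by
  induction w with
  | zero => simp [altSum]
  | succ m ih =>
    have hblock : ∀ i : ℕ,
        ((-1 : ℂ) ^ (m * d + i) * χ ((m * d + i : ℕ) : ℤ)) • expPS (((m * d + i : ℕ)) : ℂ)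
        = ((-1 : ℂ) ^ m) • (expPS ((m : ℂ) * d) * (((-1 : ℂ) ^ i * χ (i : ℤ)) • expPS (i : ℂ))) := by
      intro i
      have hχ : χ ((m * d + i : ℕ) : ℤ) = χ (i : ℤ) := by
        have := hper' m (i : ℤ)
        push_cast
        push_cast at this
        rw [add_comm]
        exact this
      have hexp : expPS (((m * d + i : ℕ)) : ℂ) = expPS ((m : ℂ) * d) * expPS (i : ℂ) := by
        rw [expPS_mul]
        push_cast
        ring_nf
      rw [hχ, hexp, pow_add, neg_one_pow_mul_odd m d hd]
      rw [PowerSeries.smul_eq_C_mul, PowerSeries.smul_eq_C_mul, PowerSeries.smul_eq_C_mul]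
      push_cast [map_mul, map_pow, map_neg, map_one]
      ring
    have hsplit : altSum χ ((m + 1) * d)
        = altSum χ (m * d) + ((-1 : ℂ) ^ m) • (expPS ((m : ℂ) * d) * altSum χ d) := by
      unfold altSum
      rw [add_mul, one_mul, Finset.sum_range_add]
      congr 1
      rw [Finset.mul_sum, Finset.smul_sum]
      exact Finset.sum_congr rfl fun i _ => hblock i
    rw [hsplit, ih, Finset.sum_range_succ, add_mul]
    congr 1
    rw [PowerSeries.smul_eq_C_mul, PowerSeries.smul_eq_C_mul]
    ring

/-- For odd positive `w`: `E_{n,χ}(wd) + E_{n,χ}(0) = 2 T_n(wd-1, χ)`. -/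
theorem stmt_9 (d : ℕ) (hd : Odd d) (hd0 : 0 < d) (χ : ℤ → ℂ)
    (hper : ∀ a : ℤ, χ (a + d) = χ a)
    (hmul : ∀ a b : ℤ, χ (a * b) = χ a * χ b) (hone : χ 1 = 1)
    (hvan : ∀ a : ℤ, 1 < Int.gcd a d → χ a = 0)
    (E : ℕ → ℂ → ℂ) (hE : IsGenEuler d χ E)
    (w : ℕ) (hw : 0 < w) (hwo : Odd w) (n : ℕ) :
    E n ((w : ℂ) * d) + E n 0 = 2 * altPowSum χ n (w * d - 1) := by
  have hper' : ∀ (k : ℕ) (a : ℤ), χ (a + k * d) = χ a := by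
    intro k
    induction k with
    | zero => simp
    | succ m ih =>
      intro a
      have h1 : a + ((m : ℤ) + 1) * d = (a + d) + m * d := by ring
      push_cast
      rw [h1, ih (a + d), hper]
  set S : PowerSeries ℂ := ∑ j ∈ range w, ((-1 : ℂ) ^ j) • expPS ((j : ℂ) * d) with hS
  have hgeom : S * (expPS (d : ℂ) + 1) = expPS ((w : ℂ) * d) + 1 := by
    have hSgeo : S = ∑ j ∈ range w, (-expPS (d : ℂ)) ^ j :=
      Finset.sum_congr rfl fun j _ => smul_expPS_eq j d
    have hg := geom_sum_mul (-expPS (d : ℂ)) w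
    rw [← hSgeo] at hg
    have hww : (-expPS (d : ℂ)) ^ w = -(expPS ((w : ℂ) * d)) := by
      rw [neg_pow, Odd.neg_one_pow hwo, expPS_pow, neg_one_mul]
    rw [hww] at hg
    calc S * (expPS (d : ℂ) + 1) = -(S * (-expPS (d : ℂ) - 1)) := by ring
      _ = expPS ((w : ℂ) * d) + 1 := by rw [hg]; ring
  have haltmul : altSum χ (w * d) = S * altSum χ d := altSum_mul d hd χ hper' w
  have h1 := hE ((w : ℂ) * d)
  have h2 := hE 0
  have hkey : ((PowerSeries.mk fun k => E k ((w : ℂ) * d) / k.factorial)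
      + (PowerSeries.mk fun k => E k 0 / k.factorial)) * (expPS (d : ℂ) + 1)
      = (2 : PowerSeries ℂ) * altSum χ (w * d) * (expPS (d : ℂ) + 1) := by
    rw [add_mul, h1, h2, expPS_zero, haltmul]
    linear_combination (-2 * altSum χ d) * hgeom
  have hu : IsUnit (expPS (d : ℂ) + 1) := by
    rw [PowerSeries.isUnit_iff_constantCoeff]
    have : PowerSeries.constantCoeff (expPS (d : ℂ) + 1) = 2 := by
      rw [map_add, ← PowerSeries.coeff_zero_eq_constantCoeff_apply, coeff_expPS]
      norm_num
    rw [this]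
    exact isUnit_iff_ne_zero.2 two_ne_zero
  have hne : (expPS (d : ℂ) + 1) ≠ 0 := by
    intro h0
    have : PowerSeries.constantCoeff (expPS (d : ℂ) + 1) = 2 := by
      rw [map_add, ← PowerSeries.coeff_zero_eq_constantCoeff_apply, coeff_expPS]
      norm_num
    rw [h0] at this
    simp at this
  have heq : (PowerSeries.mk fun k => E k ((w : ℂ) * d) / k.factorial)
      + (PowerSeries.mk fun k => E k 0 / k.factorial)
      = (2 : PowerSeries ℂ) * altSum χ (w * d) :=
    mul_right_cancel₀ hne hkey
  have hcoeff := congrArg (PowerSeries.coeff n) heq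
  rw [map_add, PowerSeries.coeff_mk, PowerSeries.coeff_mk, two_mul, map_add, ← two_mul] at hcoeff
  have haltco : PowerSeries.coeff n (altSum χ (w * d))
      = (∑ a ∈ range (w * d), (-1 : ℂ) ^ a * χ (a : ℤ) * (a : ℂ) ^ n) / n.factorial := by
    unfold altSum
    rw [map_sum, Finset.sum_div]
    exact Finset.sum_congr rfl fun a _ => by
      rw [PowerSeries.coeff_smul, coeff_expPS, smul_eq_mul]; ring
  rw [haltco] at hcoeff
  have hwd : w * d - 1 + 1 = w * d := Nat.succ_pred_eq_of_pos (Nat.mul_pos hw hd0)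
  have hfac : (n.factorial : ℂ) ≠ 0 := Nat.cast_ne_zero.2 n.factorial_ne_zero
  unfold altPowSum
  rw [hwd]
  field_simp at hcoeff
  linear_combination hcoeff
end

section
/- For any odd positive integers w1, w2, w3, any complex number y1, and any nonnegative integer n: Σ_{k+l+m=n} (n choose k,l,m) E_{k,χ}(w1 y1) T_l(w2 d − 1, χ) T_m(w3 d − 1, χ) w1^{l+m} w2^{k+m} w3^{k+l} = (w2 w3)^n Σ_{a=0}^{w2 d − 1} Σ_{b=0}^{w3 d − 1} (−1)^{a+b} χ(a) χ(b) E_{n,χ}(w1 y1 + (w1/w2) a + (w1/w3) b). -/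
open Finset

lemma expPS_add (u v : ℂ) : expPS (u + v) = expPS u * expPS v := by
  rw [expPS_eq_rescale, expPS_eq_rescale, expPS_eq_rescale,
    PowerSeries.exp_mul_exp_eq_exp_add]

lemma rescale_expPS (c x : ℂ) :
    PowerSeries.rescale c (expPS x) = expPS (x * c) := by
  ext n
  simp only [PowerSeries.coeff_rescale, expPS, PowerSeries.coeff_mk, mul_pow]
  ring

lemma expPS_add_one_ne (c : ℂ) : expPS c + 1 ≠ 0 := by
  intro h
  have := congrArg (PowerSeries.constantCoeff (R := ℂ)) h
  simp [expPS, ← PowerSeries.coeff_zero_eq_constantCoeff] at this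

/-- Key rescaled generating-function identity. -/
lemma key_rescale {d : ℕ} {χ : ℤ → ℂ} {E : ℕ → ℂ → ℂ} (hE : IsGenEuler d χ E)
    (c x : ℂ) :
    (PowerSeries.mk fun k => E k x * c ^ k / k.factorial) * (expPS ((d : ℂ) * c) + 1)
      = 2 * expPS (x * c) * PowerSeries.rescale c (altSum χ d) := by
  have h := congrArg (PowerSeries.rescale c) (hE x)
  rw [map_mul, map_add, map_one, PowerSeries.rescale_mk, rescale_expPS,
    map_mul, map_mul, map_ofNat, rescale_expPS] at h
  have : (PowerSeries.mk fun n => c ^ n * (E n x / n.factorial))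
      = PowerSeries.mk fun k => E k x * c ^ k / k.factorial := by
    ext m; simp only [PowerSeries.coeff_mk]; ring
  rwa [this] at h

/-- Coefficient of a triple product of `mk` series. -/
lemma coeff_mk3 (f g h : ℕ → ℂ) (n : ℕ) :
    PowerSeries.coeff (R := ℂ) n (PowerSeries.mk f * PowerSeries.mk g * PowerSeries.mk h)
      = ∑ k ∈ range (n + 1), ∑ l ∈ range (n + 1 - k), f k * g l * h (n - k - l) := by
  rw [mul_assoc, PowerSeries.coeff_mul, Finset.Nat.sum_antidiagonal_eq_sum_range_succ_mk]
  refine Finset.sum_congr rfl fun k hk => ?_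
  have hk' : k ≤ n := by simpa [Nat.lt_succ_iff] using hk
  rw [PowerSeries.coeff_mk, PowerSeries.coeff_mul,
    Finset.Nat.sum_antidiagonal_eq_sum_range_succ_mk, Finset.mul_sum]
  have h1 : n - k + 1 = n + 1 - k := by omega
  rw [Nat.succ_eq_add_one, h1]
  exact Finset.sum_congr rfl fun l _ => by rw [PowerSeries.coeff_mk, PowerSeries.coeff_mk]; ring

lemma altSumN_eq_mk (χ : ℤ → ℂ) (N : ℕ) (hN : 0 < N) (w : ℂ) :
    (∑ a ∈ range N, ((-1 : ℂ) ^ a * χ (a : ℤ)) • expPS ((a : ℂ) * w))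
      = PowerSeries.mk fun l => altPowSum χ l (N - 1) * w ^ l / l.factorial := by
  have hN1 : N - 1 + 1 = N := by omega
  ext l
  rw [PowerSeries.coeff_mk, map_sum, altPowSum, hN1, Finset.sum_mul, Finset.sum_div]
  refine Finset.sum_congr rfl fun a _ => ?_
  rw [PowerSeries.coeff_smul, expPS, PowerSeries.coeff_mk, smul_eq_mul, mul_pow]
  ring

lemma multinom_cast (k l m : ℕ) :
    (multinom k l m : ℂ) = ((k + l + m).factorial : ℂ)
      / ((k.factorial : ℂ) * l.factorial * m.factorial) := by
  have hdvd : k.factorial * l.factorial * m.factorial ∣ (k + l + m).factorial :=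
    dvd_trans (mul_dvd_mul_right (Nat.factorial_mul_factorial_dvd_factorial_add k l) _)
      (Nat.factorial_mul_factorial_dvd_factorial_add (k + l) m)
  rw [multinom, Nat.cast_div hdvd (Nat.cast_ne_zero.2 (by positivity)), Nat.cast_mul, Nat.cast_mul]

/-- Identity between the two expressions (a-2(1)) and (a-2(3)) for `I(Λ²₃²)`. -/
theorem stmt_12 (d : ℕ) (hd : Odd d) (hd0 : 0 < d) (χ : ℤ → ℂ)
    (hper : ∀ a : ℤ, χ (a + d) = χ a)
    (hmul : ∀ a b : ℤ, χ (a * b) = χ a * χ b) (hone : χ 1 = 1)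
    (hvan : ∀ a : ℤ, 1 < Int.gcd a d → χ a = 0)
    (E : ℕ → ℂ → ℂ) (hE : IsGenEuler d χ E)
    (w1 w2 w3 : ℕ) (hw1 : 0 < w1) (hw2 : 0 < w2) (hw3 : 0 < w3)
    (hw1o : Odd w1) (hw2o : Odd w2) (hw3o : Odd w3)
    (y1 : ℂ) (n : ℕ) :
    (∑ k ∈ range (n + 1), ∑ l ∈ range (n + 1 - k),
      (multinom k l (n - k - l) : ℂ) * E k ((w1 : ℂ) * y1) *
        altPowSum χ l (w2 * d - 1) * altPowSum χ (n - k - l) (w3 * d - 1) *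
        (w1 : ℂ) ^ (l + (n - k - l)) * (w2 : ℂ) ^ (k + (n - k - l)) * (w3 : ℂ) ^ (k + l))
    = ((w2 : ℂ) * w3) ^ n * ∑ a ∈ range (w2 * d), ∑ b ∈ range (w3 * d),
        (-1 : ℂ) ^ (a + b) * χ (a : ℤ) * χ (b : ℤ) *
          E n ((w1 : ℂ) * y1 + (w1 : ℂ) / (w2 : ℂ) * (a : ℂ) +
            (w1 : ℂ) / (w3 : ℂ) * (b : ℂ)) := by
  set X : ℂ := (w1 : ℂ) * y1 with hX
  set c : ℂ := (w2 : ℂ) * (w3 : ℂ) with hc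
  have hw2c : (w2 : ℂ) ≠ 0 := Nat.cast_ne_zero.2 hw2.ne'
  have hw3c : (w3 : ℂ) ≠ 0 := Nat.cast_ne_zero.2 hw3.ne'
  set U : PowerSeries ℂ := expPS ((d : ℂ) * c) + 1 with hU
  set P : PowerSeries ℂ :=
    PowerSeries.mk (fun k => E k X * c ^ k / k.factorial) with hP
  set A : PowerSeries ℂ :=
    ∑ a ∈ range (w2 * d), ((-1 : ℂ) ^ a * χ (a : ℤ)) • expPS ((a : ℂ) * ((w1 : ℂ) * w3))
    with hA
  set B : PowerSeries ℂ :=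
    ∑ b ∈ range (w3 * d), ((-1 : ℂ) ^ b * χ (b : ℤ)) • expPS ((b : ℂ) * ((w1 : ℂ) * w2))
    with hB
  set xab : ℕ → ℕ → ℂ := fun a b =>
    X + (w1 : ℂ) / (w2 : ℂ) * (a : ℂ) + (w1 : ℂ) / (w3 : ℂ) * (b : ℂ) with hxab
  set R : PowerSeries ℂ :=
    ∑ a ∈ range (w2 * d), ∑ b ∈ range (w3 * d),
      ((-1 : ℂ) ^ (a + b) * χ (a : ℤ) * χ (b : ℤ)) •
        PowerSeries.mk (fun k => E k (xab a b) * c ^ k / k.factorial) with hR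
  -- the main power series identity
  have main : P * A * B = R := by
    apply mul_right_cancel₀ (b := U) (expPS_add_one_ne _)
    have hPU : P * U = 2 * expPS (X * c) * PowerSeries.rescale c (altSum χ d) :=
      key_rescale hE c X
    have hsplit : ∀ a b : ℕ, expPS (xab a b * c)
        = expPS (X * c) * expPS ((a : ℂ) * ((w1 : ℂ) * w3))
          * expPS ((b : ℂ) * ((w1 : ℂ) * w2)) := by
      intro a b
      have : xab a b * c = X * c + ((a : ℂ) * ((w1 : ℂ) * w3) + (b : ℂ) * ((w1 : ℂ) * w2)) := by
        rw [hxab, hc]; field_simp; ring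
      rw [this, expPS_add, expPS_add]; ring
    have hRU : R * U = 2 * expPS (X * c) * PowerSeries.rescale c (altSum χ d) * A * B := by
      rw [hR, Finset.sum_mul]
      have step : ∀ a ∈ range (w2 * d),
          (∑ b ∈ range (w3 * d),
            ((-1 : ℂ) ^ (a + b) * χ (a : ℤ) * χ (b : ℤ)) •
              PowerSeries.mk (fun k => E k (xab a b) * c ^ k / k.factorial)) * U
          = (((-1 : ℂ) ^ a * χ (a : ℤ)) • expPS ((a : ℂ) * ((w1 : ℂ) * w3))) *
            (2 * expPS (X * c) * PowerSeries.rescale c (altSum χ d) * B) := by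
        intro a _
        rw [Finset.sum_mul, hB, Finset.mul_sum, Finset.mul_sum]
        refine Finset.sum_congr rfl fun b _ => ?_
        rw [smul_mul_assoc, key_rescale hE c (xab a b), hsplit a b,
          PowerSeries.smul_eq_C_mul, PowerSeries.smul_eq_C_mul,
          PowerSeries.smul_eq_C_mul, pow_add, ← mul_assoc, map_mul, map_mul, map_mul,
          map_mul]
        simp only [map_mul]
        ring
      rw [Finset.sum_congr rfl step, ← Finset.sum_mul, ← hA]
      ring
    rw [hRU, mul_right_comm (P * A) B U, mul_right_comm P A U, hPU]
  -- extract coefficient n and multiply by n!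
  have hA' : A = PowerSeries.mk fun l =>
      altPowSum χ l (w2 * d - 1) * ((w1 : ℂ) * w3) ^ l / l.factorial :=
    altSumN_eq_mk χ (w2 * d) (by positivity) _
  have hB' : B = PowerSeries.mk fun l =>
      altPowSum χ l (w3 * d - 1) * ((w1 : ℂ) * w2) ^ l / l.factorial :=
    altSumN_eq_mk χ (w3 * d) (by positivity) _
  have hcoeff := congrArg (PowerSeries.coeff (R := ℂ) n) main
  rw [hP, hA', hB', coeff_mk3] at hcoeff
  have hcoeffR : PowerSeries.coeff (R := ℂ) n R
      = ∑ a ∈ range (w2 * d), ∑ b ∈ range (w3 * d),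
        ((-1 : ℂ) ^ (a + b) * χ (a : ℤ) * χ (b : ℤ)) * (E n (xab a b) * c ^ n / n.factorial) := by
    rw [hR, map_sum]
    refine Finset.sum_congr rfl fun a _ => ?_
    rw [map_sum]
    exact Finset.sum_congr rfl fun b _ => by
      rw [PowerSeries.coeff_smul, PowerSeries.coeff_mk, smul_eq_mul]
  rw [hcoeffR] at hcoeff
  have hfact : ((n.factorial : ℂ)) ≠ 0 := Nat.cast_ne_zero.2 n.factorial_ne_zero
  have final := congrArg (fun z => (n.factorial : ℂ) * z) hcoeff
  simp only [Finset.mul_sum] at final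
  calc (∑ k ∈ range (n + 1), ∑ l ∈ range (n + 1 - k),
      (multinom k l (n - k - l) : ℂ) * E k X *
        altPowSum χ l (w2 * d - 1) * altPowSum χ (n - k - l) (w3 * d - 1) *
        (w1 : ℂ) ^ (l + (n - k - l)) * (w2 : ℂ) ^ (k + (n - k - l)) * (w3 : ℂ) ^ (k + l))
      = ∑ k ∈ range (n + 1), ∑ l ∈ range (n + 1 - k),
        (n.factorial : ℂ) * (E k X * c ^ k / k.factorial *
          (altPowSum χ l (w2 * d - 1) * ((w1 : ℂ) * w3) ^ l / l.factorial) *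
          (altPowSum χ (n - k - l) (w3 * d - 1) * ((w1 : ℂ) * w2) ^ (n - k - l) /
            (n - k - l).factorial)) := by
        refine Finset.sum_congr rfl fun k hk => Finset.sum_congr rfl fun l hl => ?_
        have hkn : k ≤ n := by simpa [Nat.lt_succ_iff] using hk
        have hln : l ≤ n - k := by
          have := Finset.mem_range.1 hl; omega
        set m := n - k - l with hm
        have hklm : k + l + m = n := by omega
        have hkf : ((k.factorial : ℂ)) ≠ 0 := Nat.cast_ne_zero.2 k.factorial_ne_zero
        have hlf : ((l.factorial : ℂ)) ≠ 0 := Nat.cast_ne_zero.2 l.factorial_ne_zero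
        have hmf : ((m.factorial : ℂ)) ≠ 0 := Nat.cast_ne_zero.2 m.factorial_ne_zero
        rw [multinom_cast, hklm]
        have hpow1 : l + m = n - k := by omega
        have hpow2 : k + m = k + (n - k - l) := by omega
        rw [hc]
        field_simp
        rw [mul_pow, mul_pow, mul_pow]
        have e1 : (w1 : ℂ) ^ (l + m) = (w1 : ℂ) ^ l * (w1 : ℂ) ^ m := pow_add _ _ _
        have e2 : (w2 : ℂ) ^ (k + m) = (w2 : ℂ) ^ k * (w2 : ℂ) ^ m := pow_add _ _ _
        have e3 : (w3 : ℂ) ^ (k + l) = (w3 : ℂ) ^ k * (w3 : ℂ) ^ l := pow_add _ _ _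
        rw [e1, e2, e3]
        ring
    _ = (n.factorial : ℂ) * PowerSeries.coeff (R := ℂ) n (P * A * B) := by
        rw [hP, hA', hB', coeff_mk3, Finset.mul_sum]
        exact Finset.sum_congr rfl fun k _ => by rw [Finset.mul_sum]
    _ = ((w2 : ℂ) * w3) ^ n * ∑ a ∈ range (w2 * d), ∑ b ∈ range (w3 * d),
        (-1 : ℂ) ^ (a + b) * χ (a : ℤ) * χ (b : ℤ) * E n (xab a b) := by
        rw [main, hcoeffR, Finset.mul_sum, Finset.mul_sum]
        rw [← hc]
        refine Finset.sum_congr rfl fun a _ => ?_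
        rw [Finset.mul_sum, Finset.mul_sum]
        refine Finset.sum_congr rfl fun b _ => ?_
        field_simp
end
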